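/- Let P ⊆ ℝ² be a set of 6 points containing the four vertices of a square, its center, and any sixth point. Then P determines at least three distinct angle values in (0,π). (This is the key uniqueness step showing P(2) = 5 is attained only by the square with center.) -/

import Mathlib

open EuclideanGeometry

noncomputable section

abbrev Pt : Type := EuclideanSpace ℝ (Fin 2)

/-- The point (x, y) in the Euclidean plane. -/
def pt (x y : ℝ) : Pt := (WithLp.equiv 2 (Fin 2 → ℝ)).symm ![x, y]

/-- The set of distinct angle values in (0, π) determined by a planar point set. -/
def angleSet (P : Set Pt) : Set ℝ :=
  {θ : ℝ | θ ∈ Set.Ioo 0 Real.pi ∧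
    ∃ x ∈ P, ∃ y ∈ P, ∃ z ∈ P, x ≠ y ∧ y ≠ z ∧ x ≠ z ∧ ∠ x y z = θ}

section AuxLemmas

lemma pt_ext {x y : Pt} (h0 : x 0 = y 0) (h1 : x 1 = y 1) : x = y := by
  apply PiLp.ext; intro i; fin_cases i <;> assumption

lemma inner_comp (x y : Pt) : (inner ℝ x y : ℝ) = x 0 * y 0 + x 1 * y 1 := by
  simp [PiLp.inner_apply, Fin.sum_univ_two, RCLike.inner_apply, conj_trivial, mul_comm]

lemma norm_comp (x : Pt) : ‖x‖ = Real.sqrt ((x 0)^2 + (x 1)^2) := by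
  rw [EuclideanSpace.norm_eq]; simp [Fin.sum_univ_two, sq_abs]

lemma sub_comp (x y : Pt) (i : Fin 2) : (x - y) i = x i - y i := rfl

lemma dist_sq (x y : Pt) : (dist x y)^2 = (x 0 - y 0)^2 + (x 1 - y 1)^2 := by
  rw [EuclideanSpace.dist_eq, Real.sq_sqrt (by positivity)]
  simp [Fin.sum_univ_two, Real.dist_eq, sq_abs]

lemma mid_comp (x y : Pt) (i : Fin 2) : (midpoint ℝ x y) i = (x i + y i)/2 := by
  rw [midpoint_eq_smul_add]
  simp only [PiLp.smul_apply, PiLp.add_apply, smul_eq_mul, invOf_eq_inv]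
  ring

lemma cos_formula (x y z : Pt) :
    Real.cos (∠ x y z) =
      ((x 0 - y 0)*(z 0 - y 0) + (x 1 - y 1)*(z 1 - y 1)) /
      (Real.sqrt ((x 0 - y 0)^2 + (x 1 - y 1)^2) * Real.sqrt ((z 0 - y 0)^2 + (z 1 - y 1)^2)) := by
  rw [EuclideanGeometry.angle, InnerProductGeometry.cos_angle]
  rw [vsub_eq_sub, vsub_eq_sub, inner_comp, norm_comp, norm_comp]
  simp [sub_comp]

lemma angle_eq_of_cos_eq {x y z : Pt} {φ : ℝ} (h0 : 0 ≤ φ) (h1 : φ ≤ Real.pi)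
    (h : Real.cos (∠ x y z) = Real.cos φ) : ∠ x y z = φ :=
  Real.injOn_cos ⟨angle_nonneg _ _ _, angle_le_pi _ _ _⟩ ⟨h0, h1⟩ h

lemma angle_ne {x y z : Pt} {φ : ℝ} (h : Real.cos (∠ x y z) ≠ Real.cos φ) : ∠ x y z ≠ φ :=
  fun he => h (by rw [he])

lemma angle_mem_Ioo {x y z : Pt} (h1 : Real.cos (∠ x y z) ≠ 1) (h2 : Real.cos (∠ x y z) ≠ -1) :
    ∠ x y z ∈ Set.Ioo 0 Real.pi := by
  constructor
  · rcases (angle_nonneg x y z).lt_or_eq with h | h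
    · exact h
    · exact absurd (by rw [← h, Real.cos_zero]) h1
  · rcases (angle_le_pi x y z).lt_or_eq with h | h
    · exact h
    · exact absurd (by rw [h, Real.cos_pi]) h2

lemma angleSet_finite {P : Set Pt} (hP : P.Finite) : (angleSet P).Finite := by
  apply Set.Finite.subset (Set.Finite.image (fun t : Pt × Pt × Pt => ∠ t.1 t.2.1 t.2.2)
    (hP.prod (hP.prod hP)))
  rintro θ ⟨_, x, hx, y, hy, z, hz, _, _, _, rfl⟩
  exact ⟨(x, y, z), ⟨hx, hy, hz⟩, rfl⟩

lemma mem_angleSet {P : Set Pt} {x y z : Pt} (hx : x ∈ P) (hy : y ∈ P) (hz : z ∈ P)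
    (hxy : x ≠ y) (hyz : y ≠ z) (hxz : x ≠ z) (hIoo : ∠ x y z ∈ Set.Ioo 0 Real.pi) :
    ∠ x y z ∈ angleSet P := ⟨hIoo, x, hx, y, hy, z, hz, hxy, hyz, hxz, rfl⟩

lemma witness_shape1 {x y z : Pt} {R N : ℝ} (hR : 0 < R) (hN : 0 < N) (hNR : N ≠ R)
    (hcos : Real.cos (∠ x y z) = R / (Real.sqrt R * Real.sqrt (N + R))) :
    ∠ x y z ∈ Set.Ioo 0 Real.pi ∧ ∠ x y z ≠ Real.pi/4 ∧ ∠ x y z ≠ Real.pi/2 := by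
  have hsR : 0 < Real.sqrt R := Real.sqrt_pos.2 hR
  have hsNR : 0 < Real.sqrt (N + R) := Real.sqrt_pos.2 (by linarith)
  have h1 : Real.sqrt R ^ 2 = R := Real.sq_sqrt hR.le
  have h2 : Real.sqrt (N + R) ^ 2 = N + R := Real.sq_sqrt (by linarith)
  have hden : 0 < Real.sqrt R * Real.sqrt (N + R) := by positivity
  have hcpos : 0 < Real.cos (∠ x y z) := by rw [hcos]; positivity
  have hclt : Real.cos (∠ x y z) < 1 := by
    rw [hcos, div_lt_one hden]; nlinarith
  refine ⟨angle_mem_Ioo (by linarith) (by linarith), angle_ne ?_, angle_ne ?_⟩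
  · rw [Real.cos_pi_div_four, hcos]
    intro h
    have hs2 : Real.sqrt 2 ^ 2 = 2 := Real.sq_sqrt (by norm_num)
    have h' := congrArg (fun t : ℝ => t ^ 2) h
    simp only [div_pow, mul_pow, h1, h2, hs2] at h'
    field_simp at h'
    apply hNR; nlinarith
  · rw [Real.cos_pi_div_two]; linarith

lemma witness_shape2 {x y z : Pt} {K R N : ℝ} (hR : 0 < R) (hN : 0 < N)
    (hK : K ≠ 0) (hKlt : K ^ 2 < R * N)
    (hcos : Real.cos (∠ x y z) = K / (Real.sqrt R * Real.sqrt N))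
    (hne4 : Real.cos (∠ x y z) ≠ Real.sqrt 2 / 2) :
    ∠ x y z ∈ Set.Ioo 0 Real.pi ∧ ∠ x y z ≠ Real.pi/4 ∧ ∠ x y z ≠ Real.pi/2 := by
  have hsR : 0 < Real.sqrt R := Real.sqrt_pos.2 hR
  have hsN : 0 < Real.sqrt N := Real.sqrt_pos.2 hN
  have h1 : Real.sqrt R ^ 2 = R := Real.sq_sqrt hR.le
  have h2 : Real.sqrt N ^ 2 = N := Real.sq_sqrt hN.le
  have hden : 0 < Real.sqrt R * Real.sqrt N := by positivity
  have hsq : Real.cos (∠ x y z) ^ 2 < 1 := by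
    rw [hcos, div_pow, mul_pow, h1, h2, div_lt_one (by positivity)]; exact hKlt
  refine ⟨angle_mem_Ioo ?_ ?_, angle_ne ?_, angle_ne ?_⟩
  · intro h; rw [h] at hsq; norm_num at hsq
  · intro h; rw [h] at hsq; norm_num at hsq
  · rw [Real.cos_pi_div_four]; exact hne4
  · rw [Real.cos_pi_div_two, hcos]
    exact div_ne_zero hK hden.ne'

lemma ncard3 (x y z : Pt) : ({x, y, z} : Set Pt).ncard ≤ 3 := by
  have h1 := Set.ncard_insert_le x ({y, z} : Set Pt)
  have h2 := Set.ncard_insert_le y ({z} : Set Pt)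
  have h3 : ({z} : Set Pt).ncard = 1 := Set.ncard_singleton z
  omega

lemma sq_sum_nonpos_left {x y : ℝ} (h : x^2 + y^2 ≤ 0) : x = 0 := by
  nlinarith [sq_nonneg x, sq_nonneg y]

lemma sq_sum_nonpos_right {x y : ℝ} (h : x^2 + y^2 ≤ 0) : y = 0 := by
  nlinarith [sq_nonneg x, sq_nonneg y]

lemma sq_sum_eq_zero_left {x y : ℝ} (h : x^2 + y^2 = 0) : x = 0 :=
  sq_sum_nonpos_left h.le

lemma sq_sum_eq_zero_right {x y : ℝ} (h : x^2 + y^2 = 0) : y = 0 :=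
  sq_sum_nonpos_right h.le

lemma mul_self_sum_zero_pos_false {x y : ℝ} (h : x*x + y*y = 0) (hp : 0 < x^2 + y^2) : False := by
  nlinarith

lemma lagrange_lt {K c R N : ℝ} (h : K^2 + c^2 = R*N) (hc : c ≠ 0) : K^2 < R*N := by
  nlinarith [mul_self_pos.mpr hc]

lemma aux_pi4 {r : ℝ} (hr : 0 < r) :
    r / (Real.sqrt r * (Real.sqrt 2 * Real.sqrt r)) = Real.sqrt 2 / 2 := by
  have hs : Real.sqrt r * Real.sqrt r = r := Real.mul_self_sqrt hr.le
  have h2 : Real.sqrt 2 * Real.sqrt 2 = 2 := Real.mul_self_sqrt (by norm_num)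
  have hsp : 0 < Real.sqrt r := Real.sqrt_pos.2 hr
  have h2p : 0 < Real.sqrt 2 := Real.sqrt_pos.2 (by norm_num)
  rw [div_eq_div_iff (by positivity) (by norm_num)]
  nlinarith

lemma pi4_ne_pi2 : Real.pi/4 ≠ Real.pi/2 := by
  have := Real.pi_pos; intro h; linarith

lemma neg_ne_of_eq_pos {x y : ℝ} (h : x = y) (hy : 0 < y) : -x ≠ y := by
  intro h2; rw [h] at h2; linarith

end AuxLemmas

theorem stmt18 (a b c d q : Pt)
    (hdist : ({a, b, c, d} : Set Pt).ncard = 4)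
    (hcol : ¬ Collinear ℝ ({a, b, c} : Set Pt))
    (hs1 : dist a b = dist b c) (hs2 : dist b c = dist c d) (hs3 : dist c d = dist d a)
    (hdiag : dist a c = dist b d)
    (hq : q ∉ ({a, b, c, d, midpoint ℝ a c} : Set Pt)) :
    3 ≤ (angleSet {a, b, c, d, midpoint ℝ a c, q}).ncard := by
  set m := midpoint ℝ a c with hm
  simp only [Set.mem_insert_iff, Set.mem_singleton_iff, not_or] at hq
  obtain ⟨hqa, hqb, hqc, hqd, hqm⟩ := hq
  -- distinctness from ncard
  have hac : a ≠ c := by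
    rintro rfl
    have he : ({a, b, a, d} : Set Pt) = {a, b, d} := by ext x; simp; tauto
    rw [he] at hdist
    have := ncard3 a b d
    omega
  have hbd : b ≠ d := by
    rintro rfl
    have he : ({a, b, c, b} : Set Pt) = {a, b, c} := by ext x; simp; tauto
    rw [he] at hdist
    have := ncard3 a b c
    omega
  -- midpoint components
  have em0 : m 0 = (a 0 + c 0) / 2 := by rw [hm, mid_comp]
  have em1 : m 1 = (a 1 + c 1) / 2 := by rw [hm, mid_comp]
  clear_value m
  -- coordinates
  obtain ⟨u0, hu0⟩ : ∃ t : ℝ, t = a 0 - m 0 := ⟨_, rfl⟩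
  obtain ⟨u1, hu1⟩ : ∃ t : ℝ, t = a 1 - m 1 := ⟨_, rfl⟩
  obtain ⟨v0, hv0⟩ : ∃ t : ℝ, t = b 0 - m 0 := ⟨_, rfl⟩
  obtain ⟨v1, hv1⟩ : ∃ t : ℝ, t = b 1 - m 1 := ⟨_, rfl⟩
  obtain ⟨y0, hy0⟩ : ∃ t : ℝ, t = d 0 - m 0 := ⟨_, rfl⟩
  obtain ⟨y1, hy1⟩ : ∃ t : ℝ, t = d 1 - m 1 := ⟨_, rfl⟩
  obtain ⟨p0, hp0⟩ : ∃ t : ℝ, t = q 0 - m 0 := ⟨_, rfl⟩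
  obtain ⟨p1, hp1⟩ : ∃ t : ℝ, t = q 1 - m 1 := ⟨_, rfl⟩
  -- difference identities
  have hcm0 : c 0 - m 0 = -u0 := by linear_combination hu0 - 2*em0
  have hcm1 : c 1 - m 1 = -u1 := by linear_combination hu1 - 2*em1
  have hab0 : a 0 - b 0 = u0 - v0 := by linear_combination -hu0 + hv0
  have hab1 : a 1 - b 1 = u1 - v1 := by linear_combination -hu1 + hv1
  have hbc0 : b 0 - c 0 = v0 + u0 := by linear_combination -hv0 - hcm0
  have hbc1 : b 1 - c 1 = v1 + u1 := by linear_combination -hv1 - hcm1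
  have hcd0 : c 0 - d 0 = -u0 - y0 := by linear_combination hcm0 + hy0
  have hcd1 : c 1 - d 1 = -u1 - y1 := by linear_combination hcm1 + hy1
  have hda0 : d 0 - a 0 = y0 - u0 := by linear_combination -hy0 + hu0
  have hda1 : d 1 - a 1 = y1 - u1 := by linear_combination -hy1 + hu1
  have hac0 : a 0 - c 0 = 2*u0 := by linear_combination -hu0 - hcm0
  have hac1 : a 1 - c 1 = 2*u1 := by linear_combination -hu1 - hcm1
  have hbd0 : b 0 - d 0 = v0 - y0 := by linear_combination -hv0 + hy0
  have hbd1 : b 1 - d 1 = v1 - y1 := by linear_combination -hv1 + hy1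
  -- squared distance hypotheses
  have he1 : (a 0 - b 0)^2 + (a 1 - b 1)^2 = (b 0 - c 0)^2 + (b 1 - c 1)^2 := by
    rw [← dist_sq, ← dist_sq, hs1]
  have he2 : (b 0 - c 0)^2 + (b 1 - c 1)^2 = (c 0 - d 0)^2 + (c 1 - d 1)^2 := by
    rw [← dist_sq, ← dist_sq, hs2]
  have he3 : (c 0 - d 0)^2 + (c 1 - d 1)^2 = (d 0 - a 0)^2 + (d 1 - a 1)^2 := by
    rw [← dist_sq, ← dist_sq, hs3]
  have he4 : (a 0 - c 0)^2 + (a 1 - c 1)^2 = (b 0 - d 0)^2 + (b 1 - d 1)^2 := by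
    rw [← dist_sq, ← dist_sq, hdiag]
  rw [hab0, hab1, hbc0, hbc1] at he1
  rw [hbc0, hbc1, hcd0, hcd1] at he2
  rw [hcd0, hcd1, hda0, hda1] at he3
  rw [hac0, hac1, hbd0, hbd1] at he4
  -- r2 > 0
  have hr2 : 0 < u0^2 + u1^2 := by
    by_contra h
    push_neg at h
    have h0 : u0 = 0 := sq_sum_nonpos_left h
    have h1 : u1 = 0 := sq_sum_nonpos_right h
    exact hac (pt_ext (by linear_combination -2*hu0 + 2*h0 + 2*em0)
      (by linear_combination -2*hu1 + 2*h1 + 2*em1))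
  -- structural facts
  have T1 : u0*v0 + u1*v1 = 0 := by linear_combination (-1/4 : ℝ) * he1
  have T2 : u0*y0 + u1*y1 = 0 := by linear_combination (1/4 : ℝ) * he3
  have T3 : v0^2 + v1^2 = y0^2 + y1^2 := by linear_combination he2 - 2*T1 + 2*T2
  have hu_ne : u0 ≠ 0 ∨ u1 ≠ 0 := by
    by_contra h
    push_neg at h
    rw [h.1, h.2] at hr2; norm_num at hr2
  have T4 : v0*y1 - v1*y0 = 0 := by
    rcases hu_ne with h | h
    · have h0 : u0*(v0*y1 - v1*y0) = 0 := by linear_combination y1*T1 - v1*T2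
      exact (mul_eq_zero.1 h0).resolve_left h
    · have h0 : u1*(v0*y1 - v1*y0) = 0 := by linear_combination (-y0)*T1 + v0*T2
      exact (mul_eq_zero.1 h0).resolve_left h
  have key : ((v0-y0)^2 + (v1-y1)^2) * ((v0+y0)^2 + (v1+y1)^2) = 0 := by
    linear_combination (v0^2+v1^2 - (y0^2+y1^2))*T3 + (4*(v0*y1 - v1*y0))*T4
  have hyv : y0 = -v0 ∧ y1 = -v1 := by
    rcases mul_eq_zero.1 key with h | h
    · exfalso
      have e0 : v0 - y0 = 0 := sq_sum_eq_zero_left h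
      have e1 : v1 - y1 = 0 := sq_sum_eq_zero_right h
      exact hbd (pt_ext (by linear_combination -hv0 + hy0 + e0)
        (by linear_combination -hv1 + hy1 + e1))
    · have e0 : v0 + y0 = 0 := sq_sum_eq_zero_left h
      have e1 : v1 + y1 = 0 := sq_sum_eq_zero_right h
      exact ⟨by linear_combination e0, by linear_combination e1⟩
  obtain ⟨hyv0, hyv1⟩ := hyv
  rw [hyv0, hyv1] at he4
  have F2 : u0^2 + u1^2 = v0^2 + v1^2 := by linear_combination (1/4 : ℝ) * he4
  have hv2 : 0 < v0^2 + v1^2 := F2 ▸ hr2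
  -- point distinctness
  have hma : m ≠ a := by
    intro h
    have e0 : u0 = 0 := by rw [hu0, h]; ring
    have e1 : u1 = 0 := by rw [hu1, h]; ring
    rw [e0, e1] at hr2; norm_num at hr2
  have hmb : m ≠ b := by
    intro h
    have e0 : v0 = 0 := by rw [hv0, h]; ring
    have e1 : v1 = 0 := by rw [hv1, h]; ring
    rw [e0, e1] at hv2; norm_num at hv2
  have hmc : m ≠ c := by
    intro h
    have h0 := hcm0
    have h1 := hcm1
    rw [h] at h0 h1
    have e0 : u0 = 0 := by linear_combination h0
    have e1 : u1 = 0 := by linear_combination h1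
    rw [e0, e1] at hr2; norm_num at hr2
  have hab : a ≠ b := by
    intro h
    have e0 : u0 = v0 := by rw [hu0, hv0, h]
    have e1 : u1 = v1 := by rw [hu1, hv1, h]
    have hTT := T1
    rw [e0, e1] at hTT
    exact mul_self_sum_zero_pos_false hTT hv2
  -- the two square angles
  have ang2 : ∠ a m b = Real.pi / 2 := by
    apply angle_eq_of_cos_eq (by positivity) (half_le_self Real.pi_pos.le)
    rw [cos_formula, ← hu0, ← hu1, ← hv0, ← hv1, Real.cos_pi_div_two, T1, zero_div]
  have ang4 : ∠ m a b = Real.pi / 4 := by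
    apply angle_eq_of_cos_eq (by positivity) (div_le_self Real.pi_pos.le (by norm_num))
    rw [cos_formula]
    rw [show m 0 - a 0 = -u0 by linear_combination hu0,
        show m 1 - a 1 = -u1 by linear_combination hu1,
        show b 0 - a 0 = v0 - u0 by linear_combination hu0 - hv0,
        show b 1 - a 1 = v1 - u1 by linear_combination hu1 - hv1]
    rw [show (-u0)*(v0-u0) + (-u1)*(v1-u1) = u0^2+u1^2 by linear_combination -T1]
    rw [show (-u0)^2 + (-u1)^2 = u0^2+u1^2 by ring]
    rw [show (v0-u0)^2 + (v1-u1)^2 = 2*(u0^2+u1^2) by linear_combination -2*T1 - F2]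
    rw [Real.cos_pi_div_four, Real.sqrt_mul (by norm_num : (0:ℝ) ≤ 2)]
    exact aux_pi4 hr2
  -- p ≠ 0
  have hnp : 0 < p0^2 + p1^2 := by
    by_contra h
    push_neg at h
    have h0 : p0 = 0 := sq_sum_nonpos_left h
    have h1 : p1 = 0 := sq_sum_nonpos_right h
    exact hqm (pt_ext (by linear_combination -hp0 + h0) (by linear_combination -hp1 + h1))
  -- the third angle
  obtain ⟨θ, hθmem, hθ4, hθ2⟩ :
      ∃ θ ∈ angleSet ({a, b, c, d, m, q} : Set Pt), θ ≠ Real.pi/4 ∧ θ ≠ Real.pi/2 := by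
    by_cases hcu : p0*u1 - p1*u0 = 0
    · -- q on the line ac: witness ∠ m b q
      have hL : p0*v0 + p1*v1 = 0 := by
        have h0 : (u0^2+u1^2) * (p0*v0 + p1*v1) = 0 := by
          linear_combination (u1*v0 - u0*v1)*hcu + (p0*u0+p1*u1)*T1
        exact (mul_eq_zero.1 h0).resolve_left hr2.ne'
      have hnpr : p0^2+p1^2 ≠ u0^2+u1^2 := by
        intro h
        have key2 : ((p0-u0)^2+(p1-u1)^2) * ((p0+u0)^2+(p1+u1)^2) = 0 := by
          linear_combination (p0^2+p1^2 - (u0^2+u1^2))*h + (4*(p0*u1 - p1*u0))*hcu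
        rcases mul_eq_zero.1 key2 with h' | h'
        · have e0 : p0 - u0 = 0 := sq_sum_eq_zero_left h'
          have e1 : p1 - u1 = 0 := sq_sum_eq_zero_right h'
          exact hqa (pt_ext (by linear_combination -hp0 + hu0 + e0)
            (by linear_combination -hp1 + hu1 + e1))
        · have e0 : p0 + u0 = 0 := sq_sum_eq_zero_left h'
          have e1 : p1 + u1 = 0 := sq_sum_eq_zero_right h'
          exact hqc (pt_ext (by linear_combination -hp0 - hcm0 + e0)
            (by linear_combination -hp1 - hcm1 + e1))
      have hcosv : Real.cos (∠ m b q) = (v0^2+v1^2) /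
          (Real.sqrt (v0^2+v1^2) * Real.sqrt ((p0^2+p1^2) + (v0^2+v1^2))) := by
        rw [cos_formula]
        rw [show m 0 - b 0 = -v0 by linear_combination hv0,
            show m 1 - b 1 = -v1 by linear_combination hv1,
            show q 0 - b 0 = p0 - v0 by linear_combination -hp0 + hv0,
            show q 1 - b 1 = p1 - v1 by linear_combination -hp1 + hv1]
        rw [show (-v0)*(p0-v0) + (-v1)*(p1-v1) = v0^2+v1^2 by linear_combination -hL]
        rw [show (-v0)^2 + (-v1)^2 = v0^2+v1^2 by ring]
        rw [show (p0-v0)^2 + (p1-v1)^2 = (p0^2+p1^2) + (v0^2+v1^2) by linear_combination -2*hL]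
      obtain ⟨hIoo, h4, h2⟩ := witness_shape1 hv2 hnp
        (fun h => hnpr (h.trans F2.symm)) hcosv
      exact ⟨∠ m b q, mem_angleSet (by simp) (by simp) (by simp)
        hmb (Ne.symm hqb) (Ne.symm hqm) hIoo, h4, h2⟩
    · by_cases hcv : p0*v1 - p1*v0 = 0
      · -- q on the line bd: witness ∠ m a q
        have hK : p0*u0 + p1*u1 = 0 := by
          have h0 : (v0^2+v1^2) * (p0*u0 + p1*u1) = 0 := by
            linear_combination (v1*u0 - v0*u1)*hcv + (p0*v0+p1*v1)*T1
          exact (mul_eq_zero.1 h0).resolve_left hv2.ne'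
        have hnpr : p0^2+p1^2 ≠ u0^2+u1^2 := by
          intro h
          have h' : p0^2+p1^2 = v0^2+v1^2 := h.trans F2
          have key2 : ((p0-v0)^2+(p1-v1)^2) * ((p0+v0)^2+(p1+v1)^2) = 0 := by
            linear_combination (p0^2+p1^2 - (v0^2+v1^2))*h' + (4*(p0*v1 - p1*v0))*hcv
          rcases mul_eq_zero.1 key2 with h'' | h''
          · have e0 : p0 - v0 = 0 := sq_sum_eq_zero_left h''
            have e1 : p1 - v1 = 0 := sq_sum_eq_zero_right h''
            exact hqb (pt_ext (by linear_combination -hp0 + hv0 + e0)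
              (by linear_combination -hp1 + hv1 + e1))
          · have e0 : p0 + v0 = 0 := sq_sum_eq_zero_left h''
            have e1 : p1 + v1 = 0 := sq_sum_eq_zero_right h''
            exact hqd (pt_ext
              (by linear_combination -hp0 + hy0 - hyv0 + e0)
              (by linear_combination -hp1 + hy1 - hyv1 + e1))
        have hcosu : Real.cos (∠ m a q) = (u0^2+u1^2) /
            (Real.sqrt (u0^2+u1^2) * Real.sqrt ((p0^2+p1^2) + (u0^2+u1^2))) := by
          rw [cos_formula]
          rw [show m 0 - a 0 = -u0 by linear_combination hu0,
              show m 1 - a 1 = -u1 by linear_combination hu1,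
              show q 0 - a 0 = p0 - u0 by linear_combination -hp0 + hu0,
              show q 1 - a 1 = p1 - u1 by linear_combination -hp1 + hu1]
          rw [show (-u0)*(p0-u0) + (-u1)*(p1-u1) = u0^2+u1^2 by linear_combination -hK]
          rw [show (-u0)^2 + (-u1)^2 = u0^2+u1^2 by ring]
          rw [show (p0-u0)^2 + (p1-u1)^2 = (p0^2+p1^2) + (u0^2+u1^2) by linear_combination -2*hK]
        obtain ⟨hIoo, h4, h2⟩ := witness_shape1 hr2 hnp hnpr hcosu
        exact ⟨∠ m a q, mem_angleSet (by simp) (by simp) (by simp)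
          hma (Ne.symm hqa) (Ne.symm hqm) hIoo, h4, h2⟩
      · -- generic case: witness ∠ a m q or ∠ c m q
        have hK : p0*u0 + p1*u1 ≠ 0 := by
          intro h
          apply hcv
          have h0 : (u0^2+u1^2) * (p0*v1 - p1*v0) = 0 := by
            linear_combination (u0*v1 - u1*v0)*h + (p0*u1 - p1*u0)*T1
          exact (mul_eq_zero.1 h0).resolve_left hr2.ne'
        have hKlt : (p0*u0+p1*u1)^2 < (u0^2+u1^2) * (p0^2+p1^2) :=
          lagrange_lt (by ring) hcu
        have hcosa : Real.cos (∠ a m q) = (p0*u0+p1*u1) /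
            (Real.sqrt (u0^2+u1^2) * Real.sqrt (p0^2+p1^2)) := by
          rw [cos_formula, ← hu0, ← hu1, ← hp0, ← hp1]
          rw [show u0*p0 + u1*p1 = p0*u0+p1*u1 by ring]
        by_cases h4 : Real.cos (∠ a m q) = Real.sqrt 2 / 2
        · have hcosc : Real.cos (∠ c m q) = (-(p0*u0+p1*u1)) /
              (Real.sqrt (u0^2+u1^2) * Real.sqrt (p0^2+p1^2)) := by
            rw [cos_formula, hcm0, hcm1, ← hp0, ← hp1]
            rw [show (-u0)*p0 + (-u1)*p1 = -(p0*u0+p1*u1) by ring]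
            rw [show (-u0)^2 + (-u1)^2 = u0^2+u1^2 by ring]
          have hne4 : Real.cos (∠ c m q) ≠ Real.sqrt 2 / 2 := by
            rw [hcosc, neg_div]
            rw [hcosa] at h4
            exact neg_ne_of_eq_pos h4 (by positivity)
          obtain ⟨hIoo, hne1, hne2⟩ := witness_shape2 hr2 hnp (neg_ne_zero.2 hK)
            (by rw [show (-(p0*u0+p1*u1))^2 = (p0*u0+p1*u1)^2 by ring]; exact hKlt)
            hcosc hne4
          exact ⟨∠ c m q, mem_angleSet (by simp) (by simp) (by simp)
            (Ne.symm hmc) (Ne.symm hqm) (Ne.symm hqc) hIoo, hne1, hne2⟩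
        · obtain ⟨hIoo, hne1, hne2⟩ := witness_shape2 hr2 hnp hK hKlt hcosa h4
          exact ⟨∠ a m q, mem_angleSet (by simp) (by simp) (by simp)
            (Ne.symm hma) (Ne.symm hqm) (Ne.symm hqa) hIoo, hne1, hne2⟩
  -- assemble
  have mem2 : Real.pi/2 ∈ angleSet ({a, b, c, d, m, q} : Set Pt) := by
    rw [← ang2]
    exact mem_angleSet (by simp) (by simp) (by simp) (Ne.symm hma) hmb hab
      (by rw [ang2]; exact ⟨by positivity, half_lt_self Real.pi_pos⟩)
  have mem4 : Real.pi/4 ∈ angleSet ({a, b, c, d, m, q} : Set Pt) := by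
    rw [← ang4]
    exact mem_angleSet (by simp) (by simp) (by simp) hma hab hmb
      (by rw [ang4]; exact ⟨by positivity, div_lt_self Real.pi_pos (by norm_num)⟩)
  have hsub : ({Real.pi/4, Real.pi/2, θ} : Set ℝ) ⊆ angleSet ({a, b, c, d, m, q} : Set Pt) := by
    intro x hx
    simp only [Set.mem_insert_iff, Set.mem_singleton_iff] at hx
    rcases hx with rfl | rfl | rfl
    exacts [mem4, mem2, hθmem]
  have h3 : ({Real.pi/4, Real.pi/2, θ} : Set ℝ).ncard = 3 := by
    rw [Set.ncard_insert_of_notMem, Set.ncard_insert_of_notMem, Set.ncard_singleton]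
    · simp only [Set.mem_singleton_iff]
      exact fun h => hθ2 h.symm
    · simp only [Set.mem_insert_iff, Set.mem_singleton_iff]
      push_neg
      exact ⟨pi4_ne_pi2, fun h => hθ4 h.symm⟩
  calc (3:ℕ) = ({Real.pi/4, Real.pi/2, θ} : Set ℝ).ncard := h3.symm
    _ ≤ _ := Set.ncard_le_ncard hsub (angleSet_finite (Set.toFinite _))
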